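/- Let q be a prime power, k > 1, Δ = (q^k − 1)/(q − 1), γ a primitive element of F_{q^k}, and let e₁, e₂ be integers with gcd(q − 1, k·e₁ − e₂) = 1 and gcd(Δ, e₂) = 1. Let C = { c(a, b) : a, b ∈ F_{q^k} } ⊆ (Fin (q^k − 1) → F_q), where c(a, b)_i = Tr(a·γ^{Δe₁·i} + b·γ^{e₂·i}). For j ≥ 1 let B_j be the number of vectors v ∈ (Fin (q^k − 1) → F_q) of Hamming weight j satisfying ∑_i v_i·c_i = 0 for every c ∈ C (i.e. the number of weight-j words in the dual code of C). Then B_1 = 0, B_2 = 0, and B_3 = (q^k − 3)(q^k − 1)(q − 2)(q − 1)/6. -/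

import Mathlib

open Finset
section c
variable {n : ℕ} {F E : Type*} [Field F] [DecidableEq F] [Field E] [Algebra F E]
  [Fintype F] [Fintype E]

def single3 (x y w : Fin n) (a b c : F) : Fin n → F :=
  (Pi.single x a : Fin n → F) + Pi.single y b + Pi.single w c

set_option linter.unusedSectionVars false

lemma sum_mul_single (i : Fin n) (w : F) (c : Fin n → E) :
    ∑ j, algebraMap F E ((Pi.single i w : Fin n → F) j) * c j = algebraMap F E w * c i := by
  rw [Finset.sum_eq_single i]
  · simp
  · intro j _ hj; rw [Pi.single_eq_of_ne hj, map_zero, zero_mul]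
  · simp

lemma single3_apply {x y w : Fin n} (a b c : F) (hxy : x ≠ y) (hxw : x ≠ w) (hyw : y ≠ w)
    (j : Fin n) :
    single3 x y w a b c j
      = if j = x then a else if j = y then b else if j = w then c else 0 := by
  unfold single3
  rcases eq_or_ne j x with rfl | hx
  · simp [Pi.single_eq_of_ne' hxy.symm, Pi.single_eq_of_ne' hxw.symm, hxy, hxw]
  · rcases eq_or_ne j y with rfl | hy
    · simp [Pi.single_eq_of_ne' hxy, Pi.single_eq_of_ne' hyw.symm, hx, hyw]
    · rcases eq_or_ne j w with rfl | hw
      · simp [Pi.single_eq_of_ne' hxw, Pi.single_eq_of_ne' hyw, hx, hy]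
      · simp [hx, hy, hw, Pi.single_eq_of_ne hx, Pi.single_eq_of_ne hy, Pi.single_eq_of_ne hw]

lemma single3_sum (x y w : Fin n) (a b c : F) :
    ∑ j, single3 x y w a b c j = a + b + c := by
  unfold single3
  simp [Finset.sum_add_distrib, Finset.sum_pi_single']

lemma single3_sum_mul (x y w : Fin n) (a b c : F) (z : Fin n → E) :
    ∑ j, algebraMap F E (single3 x y w a b c j) * z j
      = algebraMap F E a * z x + algebraMap F E b * z y + algebraMap F E c * z w := by
  unfold single3
  simp only [Pi.add_apply, map_add, add_mul, Finset.sum_add_distrib, sum_mul_single]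

lemma single3_support {x y w : Fin n} {a b c : F} (hxy : x ≠ y) (hxw : x ≠ w) (hyw : y ≠ w)
    (ha : a ≠ 0) (hb : b ≠ 0) (hc : c ≠ 0) :
    (univ.filter fun j => single3 x y w a b c j ≠ 0) = {x, y, w} := by
  ext j
  simp only [mem_filter, mem_univ, true_and, mem_insert, mem_singleton,
    single3_apply a b c hxy hxw hyw j]
  split_ifs <;> simp_all

lemma single3_norm {x y w : Fin n} {a b c : F} (hxy : x ≠ y) (hxw : x ≠ w) (hyw : y ≠ w)
    (ha : a ≠ 0) (hb : b ≠ 0) (hc : c ≠ 0) :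
    hammingNorm (single3 x y w a b c) = 3 := by
  unfold hammingNorm
  rw [show ({j | single3 x y w a b c j ≠ 0} : Finset (Fin n)) = univ.filter fun j => single3 x y w a b c j ≠ 0 from rfl,
    single3_support hxy hxw hyw ha hb hc]
  rw [card_insert_of_notMem (by simp [hxy, hxw]), card_insert_of_notMem (by simp [hyw]),
    card_singleton]

lemma single3_eq {v : Fin n → F} {x y w : Fin n} (hxy : x ≠ y) (hxw : x ≠ w) (hyw : y ≠ w)
    (hsupp : ∀ j, v j ≠ 0 ↔ j = x ∨ j = y ∨ j = w) :
    single3 x y w (v x) (v y) (v w) = v := by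
  funext j
  rw [single3_apply _ _ _ hxy hxw hyw]
  split_ifs with h1 h2 h3
  · rw [h1]
  · rw [h2]
  · rw [h3]
  · by_contra h
    exact (h1 <| ((hsupp j).mp (fun hv => h hv.symm)).resolve_right
      (fun hh => hh.elim h2 h3)) |>.elim

set_option maxHeartbeats 2000000 in
lemma count3 {q : ℕ} (hq : Fintype.card F = q) (z : Fin n ≃ Eˣ) :
    6 * {w : Fin n → F | hammingNorm w = 3 ∧ (∑ i, w i) = 0 ∧
        ∑ i, algebraMap F E (w i) * (z i : E) = 0}.ncard
      = (q - 1) * (q - 2) * (n * (n - 2)) := by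
  classical
  set Sol : Finset (Fin n → F) := univ.filter (fun w => hammingNorm w = 3 ∧ (∑ i, w i) = 0 ∧
      ∑ i, algebraMap F E (w i) * (z i : E) = 0) with hSolDef
  have hSet : {w : Fin n → F | hammingNorm w = 3 ∧ (∑ i, w i) = 0 ∧
      ∑ i, algebraMap F E (w i) * (z i : E) = 0}.ncard = Sol.card := by
    rw [Set.ncard_eq_toFinset_card']
    congr 1
    ext w
    simp [hSolDef]
  set OSol : Finset ((Fin n × Fin n × Fin n) × F × F × F) :=
    univ.filter (fun t => t.1.1 ≠ t.1.2.1 ∧ t.1.1 ≠ t.1.2.2 ∧ t.1.2.1 ≠ t.1.2.2 ∧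
      t.2.1 ≠ 0 ∧ t.2.2.1 ≠ 0 ∧ t.2.2.2 ≠ 0 ∧ t.2.1 + t.2.2.1 + t.2.2.2 = 0 ∧
      algebraMap F E t.2.1 * (z t.1.1 : E) + algebraMap F E t.2.2.1 * (z t.1.2.1 : E)
        + algebraMap F E t.2.2.2 * (z t.1.2.2 : E) = 0) with hOSolDef
  have key1 : OSol.card = 6 * Sol.card := by
    have hg : ∀ t ∈ OSol, single3 t.1.1 t.1.2.1 t.1.2.2 t.2.1 t.2.2.1 t.2.2.2 ∈ Sol := by
      intro t ht
      rw [hOSolDef, mem_filter] at ht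
      obtain ⟨-, h12, h13, h23, hw1, hw2, hw3, hsum, hzsum⟩ := ht
      rw [hSolDef, mem_filter]
      exact ⟨mem_univ _, single3_norm h12 h13 h23 hw1 hw2 hw3,
        by rw [single3_sum]; exact hsum,
        by rw [single3_sum_mul]; exact hzsum⟩
    have hfib : ∀ v ∈ Sol,
        (OSol.filter fun t => single3 t.1.1 t.1.2.1 t.1.2.2 t.2.1 t.2.2.1 t.2.2.2 = v).card
          = 6 := by
      intro v hv
      rw [hSolDef, mem_filter] at hv
      obtain ⟨-, hnorm, hs, hz⟩ := hv
      obtain ⟨a, b, c, hab, hac, hbc, hsupp⟩ := Finset.card_eq_three.mp hnorm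
      have hsupp' : ∀ j : Fin n, v j ≠ 0 ↔ j = a ∨ j = b ∨ j = c := by
        intro j
        have := Finset.ext_iff.mp hsupp j
        simpa using this
      have hva : v a ≠ 0 := (hsupp' a).mpr (Or.inl rfl)
      have hvb : v b ≠ 0 := (hsupp' b).mpr (Or.inr (Or.inl rfl))
      have hvc : v c ≠ 0 := (hsupp' c).mpr (Or.inr (Or.inr rfl))
      have hsupp2 : (univ.filter fun j => v j ≠ 0) = {a, b, c} := by
        ext j
        simp only [mem_filter, mem_univ, true_and, mem_insert, mem_singleton]
        exact hsupp' j
      have e1 : ∑ i, v i = v a + v b + v c := by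
        rw [← Finset.sum_filter_ne_zero univ, hsupp2,
          Finset.sum_insert (by simp [hab, hac]), Finset.sum_insert (by simp [hbc]),
          Finset.sum_singleton, add_assoc]
      have hsum3 : v a + v b + v c = 0 := by rw [← e1]; exact hs
      have e2 : ∑ i, algebraMap F E (v i) * (z i : E)
          = algebraMap F E (v a) * (z a : E) + algebraMap F E (v b) * (z b : E)
            + algebraMap F E (v c) * (z c : E) := by
        have hne : ∀ x ∈ univ, algebraMap F E (v x) * (z x : E) ≠ 0 → v x ≠ 0 := by
          intro x _ hfx hvx
          rw [hvx, map_zero, zero_mul] at hfx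
          exact hfx rfl
        rw [← Finset.sum_filter_of_ne hne,
          hsupp2, Finset.sum_insert (by simp [hab, hac]), Finset.sum_insert (by simp [hbc]),
          Finset.sum_singleton, add_assoc]
      have hzsum3 : algebraMap F E (v a) * (z a : E) + algebraMap F E (v b) * (z b : E)
          + algebraMap F E (v c) * (z c : E) = 0 := by rw [← e2]; exact hz
      have hfeq : (OSol.filter fun t =>
            single3 t.1.1 t.1.2.1 t.1.2.2 t.2.1 t.2.2.1 t.2.2.2 = v)
          = ({((a,b,c),(v a, v b, v c)), ((a,c,b),(v a, v c, v b)),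
              ((b,a,c),(v b, v a, v c)), ((b,c,a),(v b, v c, v a)),
              ((c,a,b),(v c, v a, v b)), ((c,b,a),(v c, v b, v a))} :
              Finset ((Fin n × Fin n × Fin n) × F × F × F)) := by
        ext t
        obtain ⟨⟨i₁, i₂, i₃⟩, w₁, w₂, w₃⟩ := t
        simp only [mem_filter, hOSolDef, mem_univ, true_and, mem_insert, mem_singleton,
          Prod.mk.injEq]
        constructor
        · rintro ⟨⟨h12, h13, h23, hw1, hw2, hw3, hsum, hzsum⟩, hgt⟩
          have hw1v : w₁ = v i₁ := by
            rw [← congrFun hgt i₁, single3_apply _ _ _ h12 h13 h23]; simp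
          have hw2v : w₂ = v i₂ := by
            rw [← congrFun hgt i₂, single3_apply _ _ _ h12 h13 h23]; simp [Ne.symm h12]
          have hw3v : w₃ = v i₃ := by
            rw [← congrFun hgt i₃, single3_apply _ _ _ h12 h13 h23]
            simp [Ne.symm h13, Ne.symm h23]
          have hset : ({i₁, i₂, i₃} : Finset (Fin n)) = {a, b, c} := by
            rw [← single3_support h12 h13 h23 hw1 hw2 hw3, hgt, hsupp2]
          have h1 : i₁ = a ∨ i₁ = b ∨ i₁ = c := by
            have : i₁ ∈ ({a, b, c} : Finset (Fin n)) := hset ▸ (by simp)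
            simpa using this
          have h2 : i₂ = a ∨ i₂ = b ∨ i₂ = c := by
            have : i₂ ∈ ({a, b, c} : Finset (Fin n)) := hset ▸ (by simp)
            simpa using this
          have h3 : i₃ = a ∨ i₃ = b ∨ i₃ = c := by
            have : i₃ ∈ ({a, b, c} : Finset (Fin n)) := hset ▸ (by simp)
            simpa using this
          subst hw1v hw2v hw3v
          rcases h1 with rfl | rfl | rfl <;> rcases h2 with rfl | rfl | rfl <;>
            rcases h3 with rfl | rfl | rfl <;>
              simp [hab, hac, hbc, hab.symm, hac.symm, hbc.symm] at h12 h13 h23 ⊢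
        · intro h
          have main : ∀ x y w : Fin n, x ≠ y → x ≠ w → y ≠ w →
              (∀ j, v j ≠ 0 ↔ j = x ∨ j = y ∨ j = w) →
              ((x ≠ y ∧ x ≠ w ∧ y ≠ w ∧ v x ≠ 0 ∧ v y ≠ 0 ∧ v w ≠ 0 ∧
                v x + v y + v w = 0 ∧
                algebraMap F E (v x) * (z x : E) + algebraMap F E (v y) * (z y : E)
                  + algebraMap F E (v w) * (z w : E) = 0) ∧
                single3 x y w (v x) (v y) (v w) = v) := by
            intro x y w hxy hxw hyw hsp
            have hvx := (hsp x).mpr (Or.inl rfl)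
            have hvy := (hsp y).mpr (Or.inr (Or.inl rfl))
            have hvw := (hsp w).mpr (Or.inr (Or.inr rfl))
            have hsupp2' : (univ.filter fun j => v j ≠ 0) = {x, y, w} := by
              ext j
              simp only [mem_filter, mem_univ, true_and, mem_insert, mem_singleton]
              exact hsp j
            have e1' : ∑ i, v i = v x + v y + v w := by
              rw [← Finset.sum_filter_ne_zero univ, hsupp2',
                Finset.sum_insert (by simp [hxy, hxw]), Finset.sum_insert (by simp [hyw]),
                Finset.sum_singleton, add_assoc]
            have e2' : ∑ i, algebraMap F E (v i) * (z i : E)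
                = algebraMap F E (v x) * (z x : E) + algebraMap F E (v y) * (z y : E)
                  + algebraMap F E (v w) * (z w : E) := by
              have hne' : ∀ t ∈ univ, algebraMap F E (v t) * (z t : E) ≠ 0 → v t ≠ 0 := by
                intro t _ hft hvt
                rw [hvt, map_zero, zero_mul] at hft
                exact hft rfl
              rw [← Finset.sum_filter_of_ne hne',
                hsupp2', Finset.sum_insert (by simp [hxy, hxw]),
                Finset.sum_insert (by simp [hyw]), Finset.sum_singleton, add_assoc]
            exact ⟨⟨hxy, hxw, hyw, hvx, hvy, hvw, by rw [← e1']; exact hs,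
              by rw [← e2']; exact hz⟩, single3_eq hxy hxw hyw hsp⟩
          rcases h with ⟨⟨h1, h2, h3⟩, h4, h5, h6⟩ | ⟨⟨h1, h2, h3⟩, h4, h5, h6⟩ |
            ⟨⟨h1, h2, h3⟩, h4, h5, h6⟩ | ⟨⟨h1, h2, h3⟩, h4, h5, h6⟩ |
            ⟨⟨h1, h2, h3⟩, h4, h5, h6⟩ | ⟨⟨h1, h2, h3⟩, h4, h5, h6⟩
          · rw [h1, h2, h3, h4, h5, h6]
            exact main a b c hab hac hbc hsupp'
          · rw [h1, h2, h3, h4, h5, h6]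
            exact main a c b hac hab (Ne.symm hbc) (fun j => (hsupp' j).trans (by tauto))
          · rw [h1, h2, h3, h4, h5, h6]
            exact main b a c (Ne.symm hab) hbc hac (fun j => (hsupp' j).trans (by tauto))
          · rw [h1, h2, h3, h4, h5, h6]
            exact main b c a hbc (Ne.symm hab) (Ne.symm hac) (fun j => (hsupp' j).trans (by tauto))
          · rw [h1, h2, h3, h4, h5, h6]
            exact main c a b (Ne.symm hac) (Ne.symm hbc) hab (fun j => (hsupp' j).trans (by tauto))
          · rw [h1, h2, h3, h4, h5, h6]
            exact main c b a (Ne.symm hbc) (Ne.symm hac) (Ne.symm hab)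
              (fun j => (hsupp' j).trans (by tauto))
      rw [hfeq]
      rw [card_insert_of_notMem (by simp [Prod.ext_iff, hab, hbc, hac, hab.symm, hbc.symm,
          hac.symm]),
        card_insert_of_notMem (by simp [Prod.ext_iff, hab, hbc, hac, hab.symm, hbc.symm,
          hac.symm]),
        card_insert_of_notMem (by simp [Prod.ext_iff, hab, hbc, hac, hab.symm, hbc.symm,
          hac.symm]),
        card_insert_of_notMem (by simp [Prod.ext_iff, hab, hbc, hac, hab.symm, hbc.symm,
          hac.symm]),
        card_insert_of_notMem (by simp [Prod.ext_iff, hab, hbc, hac, hab.symm, hbc.symm,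
          hac.symm]),
        card_singleton]
    rw [Finset.card_eq_sum_card_fiberwise hg, Finset.sum_congr rfl hfib, Finset.sum_const,
      smul_eq_mul, mul_comm]
  have hι0 : ∀ x : F, x ≠ 0 → algebraMap F E x ≠ 0 := by
    intro x hx h
    exact hx ((algebraMap F E).injective (by rw [h, map_zero]))
  have key2 : OSol.card = (q - 1) * (q - 2) * (n * (n - 2)) := by
    set PSet : Finset ((Fin n × Fin n) × F × F) :=
      univ.filter (fun p => p.1.1 ≠ p.1.2 ∧ p.2.1 ≠ 0 ∧ p.2.2 ≠ 0 ∧ p.2.1 + p.2.2 ≠ 0 ∧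
        algebraMap F E p.2.1 * (z p.1.1 : E) + algebraMap F E p.2.2 * (z p.1.2 : E) ≠ 0)
      with hPSetDef
    have hOP : OSol.card = PSet.card := by
      apply Finset.card_bij (fun t _ => ((t.1.1, t.1.2.1), (t.2.1, t.2.2.1)))
      · intro t ht
        rw [hOSolDef, mem_filter] at ht
        obtain ⟨-, h12, h13, h23, hw1, hw2, hw3, hsum, hzsum⟩ := ht
        rw [hPSetDef, mem_filter]
        refine ⟨mem_univ _, h12, hw1, hw2, ?_, ?_⟩
        · intro hadd
          apply hw3
          have hh : t.2.2.2 = -(t.2.1 + t.2.2.1) := by linear_combination hsum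
          rw [hh, hadd, neg_zero]
        · intro hadd
          have hz3 : algebraMap F E t.2.2.2 * ((z t.1.2.2 : Eˣ) : E) = 0 := by
            linear_combination hzsum - hadd
          rcases mul_eq_zero.mp hz3 with h | h
          · exact hι0 _ hw3 h
          · exact (z t.1.2.2).ne_zero h
      · intro t1 ht1 t2 ht2 heq
        obtain ⟨⟨i₁, i₂, i₃⟩, w₁, w₂, w₃⟩ := t1
        obtain ⟨⟨j₁, j₂, j₃⟩, x₁, x₂, x₃⟩ := t2
        rw [hOSolDef, mem_filter] at ht1 ht2
        obtain ⟨-, h12, h13, h23, hw1, hw2, hw3, hsum, hzsum⟩ := ht1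
        obtain ⟨-, g12, g13, g23, gw1, gw2, gw3, gsum, gzsum⟩ := ht2
        simp only [Prod.mk.injEq] at heq ⊢
        obtain ⟨⟨e1, e2⟩, e3, e4⟩ := heq
        subst e1; subst e2; subst e3; subst e4
        have ew : w₃ = x₃ := by linear_combination hsum - gsum
        subst ew
        have ez : algebraMap F E w₃ * ((z i₃ : Eˣ) : E) = algebraMap F E w₃ * ((z j₃ : Eˣ) : E) := by
          linear_combination hzsum - gzsum
        have ezz : ((z i₃ : Eˣ) : E) = ((z j₃ : Eˣ) : E) :=
          mul_left_cancel₀ (hι0 _ hw3) ez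
        exact ⟨⟨rfl, rfl, z.injective (Units.ext ezz)⟩, rfl, rfl, rfl⟩
      · intro p hp
        obtain ⟨⟨i₁, i₂⟩, w₁, w₂⟩ := p
        rw [hPSetDef, mem_filter] at hp
        obtain ⟨-, hij, hw1, hw2, hw12, hAB⟩ := hp
        have hw3 : -(w₁ + w₂) ≠ 0 := neg_ne_zero.mpr hw12
        have hι3 : algebraMap F E (-(w₁ + w₂)) ≠ 0 := hι0 _ hw3
        have hval : -(algebraMap F E w₁ * ((z i₁ : Eˣ) : E) + algebraMap F E w₂ * ((z i₂ : Eˣ) : E))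
            * (algebraMap F E (-(w₁ + w₂)))⁻¹ ≠ 0 :=
          mul_ne_zero (neg_ne_zero.mpr hAB) (inv_ne_zero hι3)
        set i₃ := z.symm (Units.mk0 _ hval) with hi₃
        have hz3 : ((z i₃ : Eˣ) : E)
            = -(algebraMap F E w₁ * ((z i₁ : Eˣ) : E) + algebraMap F E w₂ * ((z i₂ : Eˣ) : E))
              * (algebraMap F E (-(w₁ + w₂)))⁻¹ := by
          rw [hi₃, Equiv.apply_symm_apply]
          rfl
        have hC : algebraMap F E (-(w₁ + w₂)) = -(algebraMap F E w₁ + algebraMap F E w₂) := by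
          rw [map_neg, map_add]
        have hsum0 : algebraMap F E w₁ * ((z i₁ : Eˣ) : E) + algebraMap F E w₂ * ((z i₂ : Eˣ) : E)
            + algebraMap F E (-(w₁ + w₂)) * ((z i₃ : Eˣ) : E) = 0 := by
          rw [hz3, mul_comm (algebraMap F E (-(w₁ + w₂))),
            inv_mul_cancel_right₀ hι3, add_neg_cancel]
        have h31 : i₃ ≠ i₁ := by
          intro he
          have hh : ((z i₃ : Eˣ) : E) * algebraMap F E (-(w₁ + w₂))
              = -(algebraMap F E w₁ * ((z i₁ : Eˣ) : E) + algebraMap F E w₂ * ((z i₂ : Eˣ) : E)) := by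
            rw [hz3, inv_mul_cancel_right₀ hι3]
          rw [he] at hh
          replace hh := hh
          have hBz : algebraMap F E w₂ * ((z i₂ : Eˣ) : E) = algebraMap F E w₂ * ((z i₁ : Eˣ) : E) := by
            linear_combination hh - ((z i₁ : Eˣ) : E) * hC
          exact hij (z.injective (Units.ext (mul_left_cancel₀ (hι0 _ hw2) hBz).symm))
        have h32 : i₃ ≠ i₂ := by
          intro he
          have hh : ((z i₃ : Eˣ) : E) * algebraMap F E (-(w₁ + w₂))
              = -(algebraMap F E w₁ * ((z i₁ : Eˣ) : E) + algebraMap F E w₂ * ((z i₂ : Eˣ) : E)) := by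
            rw [hz3, inv_mul_cancel_right₀ hι3]
          rw [he] at hh
          have hAz : algebraMap F E w₁ * ((z i₁ : Eˣ) : E) = algebraMap F E w₁ * ((z i₂ : Eˣ) : E) := by
            linear_combination hh - ((z i₂ : Eˣ) : E) * hC
          exact hij (z.injective (Units.ext (mul_left_cancel₀ (hι0 _ hw1) hAz)))
        refine ⟨((i₁, i₂, i₃), (w₁, w₂, -(w₁ + w₂))), ?_, rfl⟩
        rw [hOSolDef, mem_filter]
        exact ⟨mem_univ _, hij, Ne.symm h31, Ne.symm h32, hw1, hw2, hw3, by ring, hsum0⟩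
    set Wset : Finset (F × F) := univ.filter (fun w => w.1 ≠ 0 ∧ w.2 ≠ 0 ∧ w.1 + w.2 ≠ 0)
      with hWDef
    have hPW : ∀ p ∈ PSet, (p.2, p.1.1) ∈ Wset ×ˢ (univ : Finset (Fin n)) := by
      intro p hp
      rw [hPSetDef, mem_filter] at hp
      rw [mem_product, hWDef, mem_filter]
      exact ⟨⟨mem_univ _, hp.2.2.1, hp.2.2.2.1, hp.2.2.2.2.1⟩, mem_univ _⟩
    have hPcard : PSet.card = Wset.card * n * (n - 2) := by
      rw [Finset.card_eq_sum_card_fiberwise hPW]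
      have hfib2 : ∀ x ∈ Wset ×ˢ (univ : Finset (Fin n)),
          (PSet.filter fun p => (p.2, p.1.1) = x).card = n - 2 := by
        intro x hx
        obtain ⟨⟨w₁, w₂⟩, i₁⟩ := x
        rw [mem_product, hWDef, mem_filter] at hx
        obtain ⟨⟨-, hw1, hw2, hw12⟩, -⟩ := hx
        have hval : -(algebraMap F E w₁ * ((z i₁ : Eˣ) : E)) * (algebraMap F E w₂)⁻¹ ≠ 0 :=
          mul_ne_zero (neg_ne_zero.mpr (mul_ne_zero (hι0 _ hw1) (z i₁).ne_zero))
            (inv_ne_zero (hι0 _ hw2))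
        set j := z.symm (Units.mk0 _ hval) with hj
        have hzj : ((z j : Eˣ) : E)
            = -(algebraMap F E w₁ * ((z i₁ : Eˣ) : E)) * (algebraMap F E w₂)⁻¹ := by
          rw [hj, Equiv.apply_symm_apply]
          rfl
        have hij : i₁ ≠ j := by
          intro he
          have hh : ((z j : Eˣ) : E) * algebraMap F E w₂
              = -(algebraMap F E w₁ * ((z i₁ : Eˣ) : E)) := by
            rw [hzj, inv_mul_cancel_right₀ (hι0 _ hw2)]
          rw [← he] at hh
          have : algebraMap F E (w₁ + w₂) * ((z i₁ : Eˣ) : E) = 0 := by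
            rw [map_add]
            linear_combination hh
          rcases mul_eq_zero.mp this with h | h
          · exact hι0 _ hw12 h
          · exact (z i₁).ne_zero h
        have hfeq2 : (PSet.filter fun p => (p.2, p.1.1) = ((w₁, w₂), i₁))
            = (univ \ {i₁, j}).image (fun i₂ => ((i₁, i₂), (w₁, w₂))) := by
          ext p
          obtain ⟨⟨a₁, a₂⟩, b₁, b₂⟩ := p
          simp only [hPSetDef, mem_filter, mem_univ, true_and, mem_image, mem_sdiff,
            mem_insert, mem_singleton, Prod.mk.injEq, not_or]
          constructor
          · rintro ⟨⟨hne, -, -, -, hAB⟩, ⟨rfl, rfl⟩, rfl⟩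
            refine ⟨a₂, ⟨Ne.symm hne, ?_⟩, ⟨rfl, rfl⟩, rfl, rfl⟩
            intro he
            apply hAB
            rw [he, hzj, mul_comm (algebraMap F E b₂), mul_assoc,
              inv_mul_cancel₀ (hι0 _ hw2), mul_one, add_neg_cancel]
          · rintro ⟨i₂, ⟨hi₂1, hi₂2⟩, ⟨rfl, rfl⟩, rfl, rfl⟩
            refine ⟨⟨Ne.symm hi₂1, hw1, hw2, hw12, ?_⟩, ⟨rfl, rfl⟩, rfl⟩
            intro hsum0
            apply hi₂2
            apply z.injective
            apply Units.ext
            rw [hzj, eq_mul_inv_iff_mul_eq₀ (hι0 _ hw2)]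
            linear_combination hsum0
        rw [hfeq2, Finset.card_image_of_injective _
            (fun x y hxy => by simpa using hxy),
          card_sdiff_of_subset (by simp), card_univ, Fintype.card_fin,
          card_insert_of_notMem (by simp [hij]), card_singleton]
      rw [Finset.sum_congr rfl hfib2, Finset.sum_const, smul_eq_mul, card_product,
        card_univ, Fintype.card_fin]
    have hWcard : Wset.card = (q - 1) * (q - 2) := by
      have hproj : ∀ p ∈ Wset, p.1 ∈ univ.filter (fun x : F => x ≠ 0) := by
        intro p hp
        rw [hWDef, mem_filter] at hp
        rw [mem_filter]
        exact ⟨mem_univ _, hp.2.1⟩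
      rw [Finset.card_eq_sum_card_fiberwise hproj]
      have hfib3 : ∀ x ∈ univ.filter (fun x : F => x ≠ 0),
          (Wset.filter fun p => p.1 = x).card = q - 2 := by
        intro x hx
        rw [mem_filter] at hx
        obtain ⟨-, hx0⟩ := hx
        have hfeq3 : Wset.filter (fun p => p.1 = x) = (univ \ {0, -x}).image (fun y => (x, y)) := by
          ext p
          obtain ⟨p₁, p₂⟩ := p
          simp only [hWDef, mem_filter, mem_univ, true_and, mem_image, mem_sdiff,
            mem_insert, mem_singleton, Prod.mk.injEq, not_or]
          constructor
          · rintro ⟨⟨-, h2, h3⟩, rfl⟩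
            refine ⟨p₂, ⟨h2, ?_⟩, rfl, rfl⟩
            intro he
            rw [he] at h3
            exact h3 (add_neg_cancel _)
          · rintro ⟨y, ⟨hy0, hyx⟩, rfl, rfl⟩
            refine ⟨⟨hx0, hy0, ?_⟩, rfl⟩
            intro he
            apply hyx
            linear_combination he
        rw [hfeq3, Finset.card_image_of_injective _
            (fun u v huv => by simpa using huv),
          card_sdiff_of_subset (by simp), card_univ, hq,
          card_insert_of_notMem (by simp [eq_comm, neg_eq_zero, hx0]), card_singleton]
      rw [Finset.sum_congr rfl hfib3, Finset.sum_const, smul_eq_mul,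
        Finset.filter_ne', Finset.card_erase_of_mem (mem_univ 0), card_univ, hq]
    rw [hOP, hPcard, hWcard]
    ring
  rw [hSet, ← key1, key2]

lemma count1 (z : Fin n ≃ Eˣ) :
    {w : Fin n → F | hammingNorm w = 1 ∧ (∑ i, w i) = 0 ∧
      ∑ i, algebraMap F E (w i) * ((z i : Eˣ) : E) = 0} = ∅ := by
  classical
  have hι0 : ∀ x : F, x ≠ 0 → algebraMap F E x ≠ 0 := by
    intro x hx h
    exact hx ((algebraMap F E).injective (by rw [h, map_zero]))
  rw [Set.eq_empty_iff_forall_notMem]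
  intro v hv
  obtain ⟨hnorm, hs, hz⟩ := hv
  obtain ⟨a, hsupp⟩ := Finset.card_eq_one.mp hnorm
  have hsupp' : ∀ j : Fin n, v j ≠ 0 ↔ j = a := by
    intro j
    have := Finset.ext_iff.mp hsupp j
    simpa using this
  have hva : v a ≠ 0 := (hsupp' a).mpr rfl
  have hsupp2 : (univ.filter fun j => v j ≠ 0) = {a} := by
    ext j
    simp only [mem_filter, mem_univ, true_and, mem_singleton]
    exact hsupp' j
  have hne : ∀ x ∈ univ, algebraMap F E (v x) * ((z x : Eˣ) : E) ≠ 0 → v x ≠ 0 := by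
    intro x _ hfx hvx
    rw [hvx, map_zero, zero_mul] at hfx
    exact hfx rfl
  have e2 : ∑ i, algebraMap F E (v i) * ((z i : Eˣ) : E)
      = algebraMap F E (v a) * ((z a : Eˣ) : E) := by
    rw [← Finset.sum_filter_of_ne hne, hsupp2, Finset.sum_singleton]
  rw [e2] at hz
  rcases mul_eq_zero.mp hz with h | h
  · exact hι0 _ hva h
  · exact (z a).ne_zero h

lemma count2 (z : Fin n ≃ Eˣ) :
    {w : Fin n → F | hammingNorm w = 2 ∧ (∑ i, w i) = 0 ∧
      ∑ i, algebraMap F E (w i) * ((z i : Eˣ) : E) = 0} = ∅ := by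
  classical
  have hι0 : ∀ x : F, x ≠ 0 → algebraMap F E x ≠ 0 := by
    intro x hx h
    exact hx ((algebraMap F E).injective (by rw [h, map_zero]))
  rw [Set.eq_empty_iff_forall_notMem]
  intro v hv
  obtain ⟨hnorm, hs, hz⟩ := hv
  obtain ⟨a, b, hab, hsupp⟩ := Finset.card_eq_two.mp hnorm
  have hsupp' : ∀ j : Fin n, v j ≠ 0 ↔ j = a ∨ j = b := by
    intro j
    have := Finset.ext_iff.mp hsupp j
    simpa using this
  have hva : v a ≠ 0 := (hsupp' a).mpr (Or.inl rfl)
  have hvb : v b ≠ 0 := (hsupp' b).mpr (Or.inr rfl)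
  have hsupp2 : (univ.filter fun j => v j ≠ 0) = {a, b} := by
    ext j
    simp only [mem_filter, mem_univ, true_and, mem_insert, mem_singleton]
    exact hsupp' j
  have e1 : ∑ i, v i = v a + v b := by
    rw [← Finset.sum_filter_ne_zero univ, hsupp2, Finset.sum_insert (by simp [hab]),
      Finset.sum_singleton]
  have hne : ∀ x ∈ univ, algebraMap F E (v x) * ((z x : Eˣ) : E) ≠ 0 → v x ≠ 0 := by
    intro x _ hfx hvx
    rw [hvx, map_zero, zero_mul] at hfx
    exact hfx rfl
  have e2 : ∑ i, algebraMap F E (v i) * ((z i : Eˣ) : E)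
      = algebraMap F E (v a) * ((z a : Eˣ) : E) + algebraMap F E (v b) * ((z b : Eˣ) : E) := by
    rw [← Finset.sum_filter_of_ne hne, hsupp2, Finset.sum_insert (by simp [hab]),
      Finset.sum_singleton]
  rw [e1] at hs
  rw [e2] at hz
  have hmap : algebraMap F E (v b) = -(algebraMap F E (v a)) := by
    rw [show v b = -(v a) from by linear_combination hs, map_neg]
  have hkey : algebraMap F E (v a) * (((z a : Eˣ) : E) - ((z b : Eˣ) : E)) = 0 := by
    linear_combination hz - ((z b : Eˣ) : E) * hmap
  rcases mul_eq_zero.mp hkey with h | h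
  · exact hι0 _ hva h
  · exact hab (z.injective (Units.ext (sub_eq_zero.mp h)))

end c



set_option maxHeartbeats 2000000 in
/-- The dual code of `C_{(Δe₁, e₂)}` has `B₁ = B₂ = 0` and
`B₃ = (q^k − 3)(q^k − 1)(q − 2)(q − 1)/6` (Part (B) of Theorem 1 of the paper). -/
theorem dual_code_low_weights
    (q k : ℕ) (hk : 1 < k)
    (F E : Type*) [Field F] [Fintype F] [DecidableEq F] [Field E] [Fintype E] [Algebra F E]
    (hcard : Fintype.card F = q) (hE : Fintype.card E = q ^ k)
    (γ : Eˣ) (hγ : ∀ x : Eˣ, x ∈ Subgroup.zpowers γ)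
    (Δ e₁ e₂ : ℤ) (hΔ : Δ * ((q : ℤ) - 1) = (q : ℤ) ^ k - 1)
    (hgcd : Int.gcd ((q : ℤ) - 1) ((k : ℤ) * e₁ - e₂) = 1)
    (he₂ : Int.gcd Δ e₂ = 1)
    (C : Set (Fin (q ^ k - 1) → F))
    (hC : C = {c : Fin (q ^ k - 1) → F | ∃ a b : E,
      c = fun i : Fin (q ^ k - 1) => Algebra.trace F E
        (a * ((γ ^ (Δ * e₁ * (i : ℤ)) : Eˣ) : E) + b * ((γ ^ (e₂ * (i : ℤ)) : Eˣ) : E))})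
    (B : ℕ → ℕ)
    (hB : ∀ j : ℕ, B j = {v : Fin (q ^ k - 1) → F | hammingNorm v = j ∧
      ∀ c ∈ C, ∑ i, v i * c i = 0}.ncard) :
    B 1 = 0 ∧ B 2 = 0 ∧
      6 * B 3 = (q ^ k - 3) * (q ^ k - 1) * (q - 2) * (q - 1) := by
  classical
  have hq2 : 2 ≤ q := by rw [← hcard]; exact Fintype.one_lt_card
  have hqk1 : 1 ≤ q ^ k := Nat.one_le_pow _ _ (by omega)
  have hnE : Fintype.card Eˣ = q ^ k - 1 := by rw [Fintype.card_units, hE]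
  have hcast : ((q ^ k - 1 : ℕ) : ℤ) = (q : ℤ) ^ k - 1 := by
    have h := Nat.cast_sub (R := ℤ) hqk1
    rw [h]
    push_cast
    ring
  have hq1ne : ((q : ℤ) - 1) ≠ 0 := by
    have : (2 : ℤ) ≤ (q : ℤ) := by exact_mod_cast hq2
    omega
  have hΔgeom : Δ = ∑ i ∈ Finset.range k, (q : ℤ) ^ i := by
    refine mul_right_cancel₀ hq1ne ?_
    rw [hΔ, geom_sum_mul]
  have hΔk : ((q : ℤ) - 1) ∣ (Δ - (k : ℤ)) := by
    rw [hΔgeom]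
    have h1 : (∑ i ∈ Finset.range k, (q : ℤ) ^ i) - (k : ℤ)
        = ∑ i ∈ Finset.range k, ((q : ℤ) ^ i - 1) := by
      rw [Finset.sum_sub_distrib, Finset.sum_const, Finset.card_range, nsmul_eq_mul, mul_one]
    rw [h1]
    exact Finset.dvd_sum fun i _ => sub_one_dvd_pow_sub_one _ _
  have hcop1 : IsCoprime Δ (e₂ - Δ * e₁) := by
    have h := Int.isCoprime_iff_gcd_eq_one.mpr he₂
    have h2 := h.add_mul_left_right (-e₁)
    rwa [show e₂ + Δ * -e₁ = e₂ - Δ * e₁ from by ring] at h2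
  have hcop2 : IsCoprime ((q : ℤ) - 1) (e₂ - Δ * e₁) := by
    obtain ⟨m, hm⟩ := hΔk
    have h := (Int.isCoprime_iff_gcd_eq_one.mpr hgcd).neg_right
    have h2 := h.add_mul_left_right (-(m * e₁))
    rwa [show -((k : ℤ) * e₁ - e₂) + ((q : ℤ) - 1) * -(m * e₁) = e₂ - Δ * e₁ from by
      have hΔ' : Δ = (k : ℤ) + ((q : ℤ) - 1) * m := by linarith [hm]
      rw [hΔ']; ring] at h2
  have hcopn : IsCoprime (((q ^ k - 1 : ℕ) : ℤ)) (e₂ - Δ * e₁) := by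
    rw [hcast, ← hΔ]
    exact hcop1.mul_left hcop2
  set d : Eˣ := γ ^ (e₂ - Δ * e₁) with hd
  have hγ1 : γ ^ ((q ^ k - 1 : ℕ) : ℤ) = 1 := by rw [zpow_natCast, ← hnE, pow_card_eq_one]
  have hdgen : ∀ x : Eˣ, x ∈ Subgroup.zpowers d := by
    obtain ⟨u, w, huw⟩ := hcopn
    have hγd : γ = d ^ w := by
      have h0 : γ = γ ^ (u * ((q ^ k - 1 : ℕ) : ℤ) + w * (e₂ - Δ * e₁)) := by rw [huw, zpow_one]
      rw [h0, zpow_add, mul_comm u (((q ^ k - 1 : ℕ) : ℤ)), zpow_mul, hγ1, one_zpow, one_mul,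
        mul_comm w, zpow_mul, hd]
    intro x
    rw [Subgroup.mem_zpowers_iff]
    obtain ⟨m, hm⟩ := Subgroup.mem_zpowers_iff.mp (hγ x)
    refine ⟨w * m, ?_⟩
    rw [← hm, zpow_mul, ← hγd]
  have hdord : orderOf d = q ^ k - 1 := by
    rw [orderOf_eq_card_of_forall_mem_zpowers hdgen, Nat.card_eq_fintype_card, hnE]
  have hinj : Function.Injective (fun i : Fin (q ^ k - 1) => d ^ (i : ℕ)) := by
    intro i j hij
    exact Fin.ext (pow_injOn_Iio_orderOf (by rw [hdord]; exact i.2)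
      (by rw [hdord]; exact j.2) hij)
  have hbij : Function.Bijective (fun i : Fin (q ^ k - 1) => d ^ (i : ℕ)) := by
    rw [Fintype.bijective_iff_injective_and_card]
    exact ⟨hinj, by rw [Fintype.card_fin, hnE]⟩
  set z : Fin (q ^ k - 1) ≃ Eˣ := Equiv.ofBijective _ hbij with hzdef
  have hzval : ∀ i : Fin (q ^ k - 1), z i = d ^ (i : ℕ) := fun i => rfl
  -- γ ^ (Δ e₁) descends to F
  have hAunit : (γ ^ (Δ * e₁)) ^ (q - 1) = 1 := by
    rw [← zpow_natCast, ← zpow_mul]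
    have he : Δ * e₁ * ((q - 1 : ℕ) : ℤ) = ((q ^ k - 1 : ℕ) : ℤ) * e₁ := by
      have hq1 : ((q - 1 : ℕ) : ℤ) = (q : ℤ) - 1 := by
        rw [Nat.cast_sub (by omega)]; push_cast; ring
      rw [hq1, hcast]
      linear_combination e₁ * hΔ
    rw [he, zpow_mul, hγ1, one_zpow]
  have hAfix : (((γ ^ (Δ * e₁) : Eˣ) : E)) ^ q = ((γ ^ (Δ * e₁) : Eˣ) : E) := by
    have h2 : (((γ ^ (Δ * e₁) : Eˣ) : E)) ^ (q - 1) = 1 := by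
      rw [← Units.val_pow_eq_pow_val, hAunit, Units.val_one]
    calc (((γ ^ (Δ * e₁) : Eˣ) : E)) ^ q
        = (((γ ^ (Δ * e₁) : Eˣ) : E)) ^ (q - 1 + 1) := by rw [Nat.sub_add_cancel (by omega)]
      _ = (((γ ^ (Δ * e₁) : Eˣ) : E)) ^ (q - 1) * ((γ ^ (Δ * e₁) : Eˣ) : E) := pow_succ _ _
      _ = ((γ ^ (Δ * e₁) : Eˣ) : E) := by rw [h2, one_mul]
  have hrange : ∃ a' : F, algebraMap F E a' = ((γ ^ (Δ * e₁) : Eˣ) : E) := by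
    set R : Finset E := Finset.univ.filter (fun x => x ^ q = x) with hR
    have himg : (Finset.univ : Finset F).image (algebraMap F E) ⊆ R := by
      intro x hx
      rw [Finset.mem_image] at hx
      obtain ⟨y, -, rfl⟩ := hx
      rw [hR, Finset.mem_filter]
      refine ⟨Finset.mem_univ _, ?_⟩
      rw [← map_pow, ← hcard, FiniteField.pow_card]
    have hcardimg : ((Finset.univ : Finset F).image (algebraMap F E)).card = q := by
      rw [Finset.card_image_of_injective _ (RingHom.injective _), Finset.card_univ, hcard]
    have hRle : R.card ≤ q := by
      set p : Polynomial E := Polynomial.X ^ q - Polynomial.X with hp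
      have hdX : (Polynomial.X : Polynomial E).natDegree < (Polynomial.X ^ q : Polynomial E).natDegree := by
        rw [Polynomial.natDegree_X, Polynomial.natDegree_X_pow]
        omega
      have hpdeg : p.natDegree = q := by
        rw [hp, Polynomial.natDegree_sub_eq_left_of_natDegree_lt hdX, Polynomial.natDegree_X_pow]
      have hp0 : p ≠ 0 := by
        intro h
        rw [h, Polynomial.natDegree_zero] at hpdeg
        omega
      have hsub : R ⊆ p.roots.toFinset := by
        intro x hx
        rw [hR, Finset.mem_filter] at hx
        rw [Multiset.mem_toFinset, Polynomial.mem_roots hp0]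
        rw [hp]
        simp only [Polynomial.IsRoot.def, Polynomial.eval_sub, Polynomial.eval_pow,
          Polynomial.eval_X]
        rw [hx.2, sub_self]
      calc R.card ≤ p.roots.toFinset.card := Finset.card_le_card hsub
        _ ≤ Multiset.card p.roots := Multiset.toFinset_card_le _
        _ ≤ p.natDegree := Polynomial.card_roots' p
        _ = q := hpdeg
    have heq : (Finset.univ : Finset F).image (algebraMap F E) = R :=
      Finset.eq_of_subset_of_card_le himg (by rw [hcardimg]; exact hRle)
    have hmem : ((γ ^ (Δ * e₁) : Eˣ) : E) ∈ R := by
      rw [hR, Finset.mem_filter]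
      exact ⟨Finset.mem_univ _, hAfix⟩
    rw [← heq, Finset.mem_image] at hmem
    obtain ⟨a', -, ha'⟩ := hmem
    exact ⟨a', ha'⟩
  obtain ⟨a', ha'⟩ := hrange
  have ha'0 : a' ≠ 0 := by
    intro h
    rw [h, map_zero] at ha'
    exact (γ ^ (Δ * e₁)).ne_zero ha'.symm
  have ha'pow : ∀ i : Fin (q ^ k - 1), a' ^ (i : ℕ) ≠ 0 := fun i => pow_ne_zero _ ha'0
  have hXi : ∀ i : Fin (q ^ k - 1), ((γ ^ (Δ * e₁ * ((i : ℕ) : ℤ)) : Eˣ) : E)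
      = algebraMap F E (a' ^ (i : ℕ)) := by
    intro i
    rw [map_pow, ha', ← Units.val_pow_eq_pow_val, ← zpow_natCast (γ ^ (Δ * e₁)), ← zpow_mul]
  have hYi : ∀ i : Fin (q ^ k - 1), ((γ ^ (e₂ * ((i : ℕ) : ℤ)) : Eˣ) : E)
      = algebraMap F E (a' ^ (i : ℕ)) * ((z i : Eˣ) : E) := by
    intro i
    rw [← hXi i, hzval i, ← Units.val_mul]
    congr 1
    rw [hd, ← zpow_natCast (γ ^ (e₂ - Δ * e₁)), ← zpow_mul, ← zpow_add]
    congr 1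
    ring
  -- trace nondegeneracy
  haveI : Module.Finite F E := Module.Finite.of_finite
  haveI : Algebra.IsSeparable F E := inferInstance
  have htr : ∀ y : E, (∀ x : E, Algebra.trace F E (x * y) = 0) → y = 0 := by
    intro y hy
    apply (traceForm_nondegenerate F E).1 y
    intro x
    rw [Algebra.traceForm_apply, mul_comm]
    exact hy x
  -- dual code characterization
  have hdual : ∀ v : Fin (q ^ k - 1) → F,
      (∀ c ∈ C, ∑ i, v i * c i = 0) ↔
        ((∑ i, v i * a' ^ (i : ℕ)) = 0 ∧
          ∑ i, algebraMap F E (v i * a' ^ (i : ℕ)) * ((z i : Eˣ) : E) = 0) := by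
    intro v
    have hcomp : ∀ a b : E,
        ∑ i, v i * (Algebra.trace F E) (a * ((γ ^ (Δ * e₁ * ((i : ℕ) : ℤ)) : Eˣ) : E)
            + b * ((γ ^ (e₂ * ((i : ℕ) : ℤ)) : Eˣ) : E))
          = Algebra.trace F E (a * algebraMap F E (∑ i, v i * a' ^ (i : ℕ))
            + b * ∑ i, algebraMap F E (v i * a' ^ (i : ℕ)) * ((z i : Eˣ) : E)) := by
      intro a b
      have hterm : ∀ i : Fin (q ^ k - 1),
          v i * (Algebra.trace F E) (a * ((γ ^ (Δ * e₁ * ((i : ℕ) : ℤ)) : Eˣ) : E)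
              + b * ((γ ^ (e₂ * ((i : ℕ) : ℤ)) : Eˣ) : E))
            = Algebra.trace F E (a * algebraMap F E (v i * a' ^ (i : ℕ))
              + b * (algebraMap F E (v i * a' ^ (i : ℕ)) * ((z i : Eˣ) : E))) := by
        intro i
        rw [hXi i, hYi i]
        have hms := (Algebra.trace F E).map_smul (v i)
          (a * algebraMap F E (a' ^ (i : ℕ))
            + b * (algebraMap F E (a' ^ (i : ℕ)) * ((z i : Eˣ) : E)))
        rw [smul_eq_mul] at hms
        rw [← hms]
        congr 1
        rw [smul_add, Algebra.smul_def, Algebra.smul_def, map_mul]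
        ring
      rw [Finset.sum_congr rfl (fun i _ => hterm i), ← map_sum, Finset.sum_add_distrib,
        ← Finset.mul_sum, ← Finset.mul_sum, map_sum (algebraMap F E)]
    constructor
    · intro h
      have hS1 : algebraMap F E (∑ i, v i * a' ^ (i : ℕ)) = 0 := by
        apply htr
        intro x
        have hx := h (fun i : Fin (q ^ k - 1) => Algebra.trace F E
            (x * ((γ ^ (Δ * e₁ * (i : ℤ)) : Eˣ) : E) + 0 * ((γ ^ (e₂ * (i : ℤ)) : Eˣ) : E)))
          (by rw [hC]; exact ⟨x, 0, rfl⟩)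
        rw [hcomp x 0] at hx
        simpa using hx
      have hS2 : (∑ i, algebraMap F E (v i * a' ^ (i : ℕ)) * ((z i : Eˣ) : E)) = 0 := by
        apply htr
        intro x
        have hx := h (fun i : Fin (q ^ k - 1) => Algebra.trace F E
            (0 * ((γ ^ (Δ * e₁ * (i : ℤ)) : Eˣ) : E) + x * ((γ ^ (e₂ * (i : ℤ)) : Eˣ) : E)))
          (by rw [hC]; exact ⟨0, x, rfl⟩)
        rw [hcomp 0 x] at hx
        simpa using hx
      refine ⟨?_, hS2⟩
      apply (algebraMap F E).injective
      rw [map_zero]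
      exact hS1
    · rintro ⟨h1, h2⟩ c hc
      rw [hC] at hc
      obtain ⟨a, b, rfl⟩ := hc
      simp only []
      rw [hcomp a b, h1, h2, map_zero, mul_zero, mul_zero, add_zero, map_zero]
  -- the multiplication-by-a'^i equivalence
  have hTbij : Function.Bijective (fun (v : Fin (q ^ k - 1) → F) => fun i => v i * a' ^ (i : ℕ)) := by
    constructor
    · intro u v huv
      funext i
      exact mul_right_cancel₀ (ha'pow i) (congrFun huv i)
    · intro w
      refine ⟨fun i => w i * (a' ^ (i : ℕ))⁻¹, ?_⟩
      funext i
      show w i * (a' ^ (i : ℕ))⁻¹ * a' ^ (i : ℕ) = w i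
      rw [mul_assoc, inv_mul_cancel₀ (ha'pow i), mul_one]
  set T := Equiv.ofBijective _ hTbij with hT
  have hTnorm : ∀ v : Fin (q ^ k - 1) → F, hammingNorm (T v) = hammingNorm v := by
    intro v
    unfold hammingNorm
    congr 1
    apply Finset.filter_congr
    intro i _
    simp [mul_eq_zero, ha'pow i, hT, Equiv.ofBijective]
  have hsetj : ∀ j : ℕ, {v : Fin (q ^ k - 1) → F | hammingNorm v = j ∧ ∀ c ∈ C, ∑ i, v i * c i = 0}
      = T ⁻¹' {w : Fin (q ^ k - 1) → F | hammingNorm w = j ∧ (∑ i, w i) = 0 ∧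
          ∑ i, algebraMap F E (w i) * ((z i : Eˣ) : E) = 0} := by
    intro j
    ext v
    simp only [Set.mem_setOf_eq, Set.mem_preimage]
    rw [hTnorm v]
    constructor
    · rintro ⟨h1, h2⟩
      exact ⟨h1, (hdual v).mp h2⟩
    · rintro ⟨h1, h2⟩
      exact ⟨h1, (hdual v).mpr h2⟩
  have hncard : ∀ S : Set (Fin (q ^ k - 1) → F), (T ⁻¹' S).ncard = S.ncard := by
    intro S
    have h : T ⁻¹' S = T.symm '' S := by
      rw [Equiv.image_eq_preimage_symm, Equiv.symm_symm]
    rw [h, Set.ncard_image_of_injective _ (Equiv.injective _)]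
  refine ⟨?_, ?_, ?_⟩
  · rw [hB 1, hsetj 1, count1 z, Set.preimage_empty, Set.ncard_empty]
  · rw [hB 2, hsetj 2, count2 z, Set.preimage_empty, Set.ncard_empty]
  · rw [hB 3, hsetj 3, hncard, count3 hcard z]
    have h2 : q ^ k - 1 - 2 = q ^ k - 3 := by omega
    rw [h2]
    ring
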